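/- Let R be an integral domain and f a uniquely Euclidean function on R. Then the set K = R^× ∪ {0} (the units of R together with 0) is a subfield of R: it contains 0 and 1, is closed under addition, negation, and multiplication, and every nonzero element of K has a multiplicative inverse in K. -/

import Mathlib

/-- `f` is a Euclidean function on `R`: for all `a b : R` with `b ≠ 0`, there exist
`q, r` with `a = q * b + r` and (`r = 0` or `f r < f b`). -/
def IsEuclideanFn {R : Type*} [CommRing R] (f : R → ℕ) : Prop :=
  ∀ a b : R, b ≠ 0 → ∃ q r : R, a = q * b + r ∧ (r = 0 ∨ f r < f b)

/-- `f` is strongly Euclidean: Euclidean, and `f a ≤ f (a * b)` for nonzero `a, b`. -/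
def IsStronglyEuclideanFn {R : Type*} [CommRing R] (f : R → ℕ) : Prop :=
  IsEuclideanFn f ∧ ∀ a b : R, a ≠ 0 → b ≠ 0 → f a ≤ f (a * b)

/-- `f` is ultra-Euclidean: Euclidean, and `f (a + b) ≤ max (f a) (f b)` for nonzero
`a, b` with `a + b ≠ 0`. -/
def IsUltraEuclideanFn {R : Type*} [CommRing R] (f : R → ℕ) : Prop :=
  IsEuclideanFn f ∧ ∀ a b : R, a ≠ 0 → b ≠ 0 → a + b ≠ 0 → f (a + b) ≤ max (f a) (f b)

/-- `f` is uniquely Euclidean: for all `a b : R` with `b ≠ 0`, there is a *unique* pair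
`(q, r)` with `a = q * b + r` and (`r = 0` or `f r < f b`). -/
def IsUniquelyEuclideanFn {R : Type*} [CommRing R] (f : R → ℕ) : Prop :=
  ∀ a b : R, b ≠ 0 → ∃! qr : R × R, a = qr.1 * b + qr.2 ∧ (qr.2 = 0 ∨ f qr.2 < f b)

/-- The refinement of `f`: `f̃ a` is the minimum of `f (a * b)` over nonzero `b`. -/
noncomputable def refinement {R : Type*} [CommRing R] (f : R → ℕ) (a : R) : ℕ :=
  sInf {n : ℕ | ∃ b : R, b ≠ 0 ∧ f (a * b) = n}

/-- Units have minimal `f`-value among nonzero elementsward uniquely Euclidean `f`. -/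
lemma unit_f_min {R : Type*} [CommRing R] [IsDomain R] {f : R → ℕ}
    (hf : IsUniquelyEuclideanFn f) {u x : R} (hu : IsUnit u) (hx : x ≠ 0) :
    f u ≤ f x := by
  by_contra h
  push_neg at h
  obtain ⟨c, hc⟩ := hu.exists_right_inv
  have hu0 : u ≠ 0 := hu.ne_zero
  obtain ⟨qr, _, huniq⟩ := hf x u hu0
  have h1 : ((x * c, 0) : R × R) = qr := by
    apply huniq
    constructor
    · simp [mul_assoc, mul_comm c u, hc]
    · exact Or.inl rfl
  have h2 : ((0, x) : R × R) = qr := by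
    apply huniq
    exact ⟨by ring, Or.inr h⟩
  have := congrArg Prod.snd (h1.trans h2.symm)
  exact hx this.symm

lemma unit_add_unit {R : Type*} [CommRing R] [IsDomain R] {f : R → ℕ}
    (hf : IsUniquelyEuclideanFn f) {u v : R} (hu : IsUnit u) (hv : IsUnit v)
    (hs : u + v ≠ 0) : IsUnit (u + v) := by
  by_cases h : f u < f (u + v) ∧ f (-v) < f (u + v)
  · exfalso
    obtain ⟨qr, _, huniq⟩ := hf u (u + v) hs
    have h1 : ((0, u) : R × R) = qr := by
      apply huniq; exact ⟨by ring, Or.inr h.1⟩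
    have h2 : ((1, -v) : R × R) = qr := by
      apply huniq; exact ⟨by ring, Or.inr h.2⟩
    have : (0 : R) = 1 := congrArg Prod.fst (h1.trans h2.symm)
    exact zero_ne_one this
  · have hmin : ∀ x : R, x ≠ 0 → f (u + v) ≤ f x := by
      intro x hx
      rcases not_and_or.mp h with h' | h'
      · exact le_trans (not_lt.mp h') (unit_f_min hf hu hx)
      · exact le_trans (not_lt.mp h') (unit_f_min hf hv.neg hx)
    obtain ⟨⟨q, r⟩, ⟨heq, hr⟩, _⟩ := hf 1 (u + v) hs
    simp only at heq hr
    by_cases hr0 : r = 0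
    · rw [hr0, add_zero] at heq
      exact IsUnit.of_mul_eq_one q (by rw [mul_comm]; exact heq.symm)
    · rcases hr with h0 | hlt
      · exact absurd h0 hr0
      · exact absurd hlt (not_lt.mpr (hmin r hr0))

theorem units_with_zero_form_subfield {R : Type*} [CommRing R] [IsDomain R]
    (f : R → ℕ) (hf : IsUniquelyEuclideanFn f)
    (K : Set R) (hK : K = {x : R | IsUnit x ∨ x = 0}) :
    (0 : R) ∈ K ∧ (1 : R) ∈ K ∧
    (∀ u v : R, u ∈ K → v ∈ K → u + v ∈ K) ∧
    (∀ u : R, u ∈ K → -u ∈ K) ∧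
    (∀ u v : R, u ∈ K → v ∈ K → u * v ∈ K) ∧
    (∀ u : R, u ∈ K → u ≠ 0 → ∃ v ∈ K, u * v = 1) := by
  subst hK
  refine ⟨Or.inr rfl, Or.inl isUnit_one, ?_, ?_, ?_, ?_⟩
  · rintro u v (hu | rfl) (hv | rfl)
    · by_cases hs : u + v = 0
      · exact Or.inr hs
      · exact Or.inl (unit_add_unit hf hu hv hs)
    · simpa using Or.inl hu
    · simpa using Or.inl hv
    · simp
  · rintro u (hu | rfl)
    · exact Or.inl hu.neg
    · simp
  · rintro u v (hu | rfl) (hv | rfl)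
    · exact Or.inl (hu.mul hv)
    · simp
    · simp
    · simp
  · rintro u (hu | rfl) hu0
    · obtain ⟨c, hc⟩ := hu.exists_right_inv
      exact ⟨c, Or.inl (IsUnit.of_mul_eq_one (a := c) u (by rw [mul_comm]; exact hc)), hc⟩
    · exact absurd rfl hu0
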